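/- Let 0 ≤ a < t₁ and let R : (a, t₁) → ℝ be differentiable with R(t) > 0 for all t ∈ (a, t₁) and R(t) → 0 as t → t₁ from the left. If for every t ∈ (a, t₁) the growth rate satisfies −2/R(t) ≤ R′(t) ≤ −1/(2R(t)), then for every t ∈ (a, t₁), √(t₁ − t) ≤ R(t) ≤ 2√(t₁ − t). (This is the sub- /supersolution comparison controlling the radius of a vanishing particle near its extinction time t₁.) -/

import Mathlib

open Set Filter Real

/-- Sub- and supersolution comparison controlling the radius of a vanishing particle
near its extinction time `t₁`: if on `(a, t₁)` the radius is positive, tends to `0`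
as `t → t₁⁻`, and its growth rate satisfies `−2/R ≤ R′ ≤ −1/(2R)`, then
`√(t₁ − t) ≤ R(t) ≤ 2√(t₁ − t)` on `(a, t₁)`. -/
theorem vanishing_particle_comparison
    (a t₁ : ℝ) (ha : 0 ≤ a) (hat : a < t₁) (R : ℝ → ℝ)
    (hdiff : ∀ t ∈ Ioo a t₁, DifferentiableAt ℝ R t)
    (hpos : ∀ t ∈ Ioo a t₁, 0 < R t)
    (hlim : Tendsto R (nhdsWithin t₁ (Iio t₁)) (nhds 0))
    (hrate : ∀ t ∈ Ioo a t₁, -2 / R t ≤ deriv R t ∧ deriv R t ≤ -1 / (2 * R t)) :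
    ∀ t ∈ Ioo a t₁, Real.sqrt (t₁ - t) ≤ R t ∧ R t ≤ 2 * Real.sqrt (t₁ - t) := by
  intro t ht
  -- F = R^2
  have hFd : ∀ s ∈ Ioo a t₁, HasDerivAt (fun x => (R x)^2) (2 * R s * deriv R s) s := by
    intro s hs
    exact (by simpa using ((hdiff s hs).hasDerivAt.pow 2) : HasDerivAt (R ^ 2) (2 * R s * deriv R s) s)
  -- derivative bounds for F
  have hFd_bounds : ∀ s ∈ Ioo a t₁,
      -4 ≤ 2 * R s * deriv R s ∧ 2 * R s * deriv R s ≤ -1 := by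
    intro s hs
    have hR := hpos s hs
    have h1 := (hrate s hs).1
    have h2 := (hrate s hs).2
    constructor
    · have : 2 * R s * (-2 / R s) ≤ 2 * R s * deriv R s :=
        mul_le_mul_of_nonneg_left h1 (by positivity)
      calc (-4 : ℝ) = 2 * R s * (-2 / R s) := by field_simp; ring
        _ ≤ _ := this
    · have : 2 * R s * deriv R s ≤ 2 * R s * (-1 / (2 * R s)) :=
        mul_le_mul_of_nonneg_left h2 (by positivity)
      calc 2 * R s * deriv R s ≤ 2 * R s * (-1 / (2 * R s)) := this
        _ = -1 := by field_simp
  -- g = F + t is antitone on Ioo a t₁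
  have hg : AntitoneOn (fun s => (R s)^2 + s) (Ioo a t₁) := by
    apply antitoneOn_of_deriv_nonpos (convex_Ioo a t₁)
    · exact fun s hs => ((hFd s hs).continuousAt.continuousWithinAt).add continuousWithinAt_id
    · intro s hs
      rw [interior_Ioo] at hs
      exact (((hFd s hs).add (hasDerivAt_id s)).differentiableAt).differentiableWithinAt
    · intro s hs
      rw [interior_Ioo] at hs
      have : HasDerivAt (fun s => (R s)^2 + s) (2 * R s * deriv R s + 1) s :=
        (hFd s hs).add (hasDerivAt_id s)
      rw [this.deriv]
      linarith [(hFd_bounds s hs).2]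
  -- h = F + 4t is monotone on Ioo a t₁
  have hh : MonotoneOn (fun s => (R s)^2 + 4 * s) (Ioo a t₁) := by
    apply monotoneOn_of_deriv_nonneg (convex_Ioo a t₁)
    · exact fun s hs => ((hFd s hs).continuousAt.continuousWithinAt).add
        (continuousWithinAt_const.mul continuousWithinAt_id)
    · intro s hs
      rw [interior_Ioo] at hs
      have h4 : HasDerivAt (fun s : ℝ => 4 * s) 4 s := by
        simpa using (hasDerivAt_id s).const_mul (4:ℝ)
      exact (((hFd s hs).add h4).differentiableAt).differentiableWithinAt
    · intro s hs
      rw [interior_Ioo] at hs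
      have h4 : HasDerivAt (fun s : ℝ => 4 * s) 4 s := by
        simpa using (hasDerivAt_id s).const_mul (4:ℝ)
      have : HasDerivAt (fun s => (R s)^2 + 4 * s) (2 * R s * deriv R s + 4) s :=
        (hFd s hs).add h4
      rw [this.deriv]
      linarith [(hFd_bounds s hs).1]
  -- limits as s → t₁⁻
  have hFlim : Tendsto (fun s => (R s)^2) (nhdsWithin t₁ (Iio t₁)) (nhds 0) := by
    have := hlim.pow 2
    simpa using this
  have hglim : Tendsto (fun s => (R s)^2 + s) (nhdsWithin t₁ (Iio t₁)) (nhds t₁) := by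
    have hid : Tendsto (fun s : ℝ => s) (nhdsWithin t₁ (Iio t₁)) (nhds t₁) :=
      tendsto_id.mono_left nhdsWithin_le_nhds
    simpa using hFlim.add hid
  have hhlim : Tendsto (fun s => (R s)^2 + 4 * s) (nhdsWithin t₁ (Iio t₁)) (nhds (4 * t₁)) := by
    have hid : Tendsto (fun s : ℝ => 4 * s) (nhdsWithin t₁ (Iio t₁)) (nhds (4 * t₁)) :=
      (tendsto_id.mono_left nhdsWithin_le_nhds).const_mul 4
    simpa using hFlim.add hid
  have hev : ∀ᶠ s in nhdsWithin t₁ (Iio t₁), s ∈ Ioo t t₁ := by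
    have : Ioo t t₁ ∈ nhdsWithin t₁ (Iio t₁) := by
      rw [mem_nhdsWithin]
      exact ⟨Ioi t, isOpen_Ioi, ht.2, fun x hx => ⟨hx.1, hx.2⟩⟩
    exact this
  -- lower bound on F t
  have hlow : t₁ - t ≤ (R t)^2 := by
    have : t₁ ≤ (R t)^2 + t := by
      refine le_of_tendsto hglim (hev.mono fun s hs => ?_)
      exact hg ht ⟨lt_trans ht.1 hs.1, hs.2⟩ hs.1.le
    linarith
  have hup : (R t)^2 ≤ 4 * (t₁ - t) := by
    have : (R t)^2 + 4 * t ≤ 4 * t₁ := by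
      refine ge_of_tendsto hhlim (hev.mono fun s hs => ?_)
      exact hh ht ⟨lt_trans ht.1 hs.1, hs.2⟩ hs.1.le
    linarith
  have hsq : Real.sqrt (t₁ - t) ^ 2 = t₁ - t := Real.sq_sqrt (by linarith [ht.2])
  have hsn : 0 ≤ Real.sqrt (t₁ - t) := Real.sqrt_nonneg _
  have hRpos := hpos t ht
  constructor
  · nlinarith
  · nlinarith
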